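/- Let A be a set and f₁, …, f_n : A → ℂ. If the determinant of the matrix (f_i(z_j))_{i,j} vanishes for every choice of z₁, …, z_n ∈ A, then the functions f₁, …, f_n are linearly dependent over ℂ, i.e., there exist complex numbers a₁, …, a_n, not all zero, with ∑_i a_i f_i(z) = 0 for all z ∈ A. -/

import Mathlib

/-- If `det (f i (z j)) = 0` for every choice of points `z₁,…,z_n ∈ A`, then
`f₁,…,f_n` are linearly dependent over `ℂ`. -/
theorem det_vanish_imp_linear_dependent {A : Type*} (n : ℕ) (f : Fin n → A → ℂ)
    (h : ∀ z : Fin n → A, (Matrix.of fun i j => f i (z j)).det = 0) :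
    ∃ a : Fin n → ℂ, a ≠ 0 ∧ ∀ z : A, ∑ i, a i * f i z = 0 := by
  classical
  set φ : A → (Fin n → ℂ) := fun z i => f i z with hφ
  set S : Set (Fin n → ℂ) := Set.range φ with hS
  by_cases htop : Submodule.span ℂ S = ⊤
  · exfalso
    obtain ⟨b, hbS, hbspan, hbind⟩ := exists_linearIndependent ℂ S
    rw [htop] at hbspan
    -- b is a basis of ℂⁿ
    have hbasis : Module.Basis b ℂ (Fin n → ℂ) := Module.Basis.mk hbind (by rw [Subtype.range_coe, hbspan])
    have hcard : Nat.card b = n := by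
      have := Module.finrank_eq_nat_card_basis hbasis
      simpa [Module.finrank_fin_fun] using this.symm
    have hfin : Finite b := Nat.finite_of_card_ne_zero ?_
    swap
    · rcases Nat.eq_zero_or_pos n with hn | hn
      · -- n = 0 : empty matrix has det 1
        subst hn
        have := h (fun i => i.elim0)
        simp [Matrix.det_fin_zero] at this
      · omega
    have := Fintype.ofFinite b
    have hcard' : Fintype.card b = n := by simpa [Nat.card_eq_fintype_card] using hcard
    let e : Fin n ≃ b := (Fintype.equivFinOfCardEq hcard').symm
    -- choose points z j with φ (z j) = e j
    have hz : ∀ j : Fin n, ∃ z : A, φ z = (e j : Fin n → ℂ) := fun j => hbS (e j).2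
    choose z hzeq using hz
    have hdet := h z
    have hind : LinearIndependent ℂ (fun j : Fin n => (Matrix.of fun i j => f i (z j)).transpose j) := by
      have : (fun j : Fin n => (Matrix.of fun i j => f i (z j)).transpose j)
          = (fun j : Fin n => ((↑) : b → (Fin n → ℂ)) (e j)) := by
        funext j
        rw [← hzeq j]
        rfl
      rw [this]
      exact hbind.comp e e.injective
    have : IsUnit (Matrix.of fun i j => f i (z j)) :=
      Matrix.linearIndependent_cols_iff_isUnit.mp hind
    have : IsUnit (Matrix.of fun i j => f i (z j)).det := this.map Matrix.detMonoidHom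
    rw [hdet] at this
    exact not_isUnit_zero this
  · obtain ⟨ψ, hψ0, hψ⟩ := Submodule.exists_dual_map_eq_bot_of_lt_top
      (lt_top_iff_ne_top.mpr htop) inferInstance
    set ε : Fin n → (Fin n → ℂ) := fun i => Pi.single i 1 with hε
    refine ⟨fun i => ψ (ε i), ?_, ?_⟩
    · intro ha
      apply hψ0
      apply LinearMap.ext
      intro v
      have hv : v = ∑ i, v i • ε i := by
        funext j; simp [hε, Finset.sum_apply, Pi.single_apply]
      rw [hv]
      simp only [map_sum, map_smul]
      have h0 : ∀ i, ψ (ε i) = 0 := fun i => congrFun ha i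
      simp [h0]
    · intro zz
      have hmem : φ zz ∈ Submodule.span ℂ S := Submodule.subset_span ⟨zz, rfl⟩
      have hz0 : ψ (φ zz) = 0 := by
        have hm : ψ (φ zz) ∈ Submodule.map ψ (Submodule.span ℂ S) :=
          Submodule.mem_map_of_mem hmem
        rw [hψ] at hm
        simpa using hm
      calc ∑ i, ψ (ε i) * f i zz = ψ (∑ i, f i zz • ε i) := by
            simp [mul_comm]
          _ = ψ (φ zz) := by
            congr 1
            funext j; simp [hε, hφ, Finset.sum_apply, Pi.single_apply]
          _ = 0 := hz0
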